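/- arXiv:2307.07611 — 2 statements merged into one kernel-verified Lean document; each statement's English description precedes it below -/
import Mathlib

section
/- Let A be an n×n matrix over a field written as A = M + N, where M is an invertible (lower or upper) triangular matrix. Define recursively M_0 + N_0 = A (with M_0 = M, N_0 = N), and for i ≥ 0, M_{i+1} + N_{i+1} = I + M_i^{-1} N_i, where each M_i is the triangular part of the indicated matrix and is assumed invertible. Then for every p ≥ 0, A = (∏_{i=0}^{p} M_i) · (I + M_p^{-1} N_p). -/
theorem recursive_split_factorization {n : ℕ} {F : Type*} [Field F]
    (A : Matrix (Fin n) (Fin n) F)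
    (M N : ℕ → Matrix (Fin n) (Fin n) F)
    (hsplit0 : M 0 + N 0 = A)
    (hMinv : ∀ i, IsUnit (M i))
    (hrec : ∀ i, M (i + 1) + N (i + 1) = 1 + (M i)⁻¹ * N i) :
    ∀ p : ℕ, A = (((List.range (p + 1)).map M).prod) * (1 + (M p)⁻¹ * N p) := by
  have key : ∀ i, M i * (1 + (M i)⁻¹ * N i) = M i + N i := by
    intro i
    have h := Matrix.mul_nonsing_inv (M i)
      ((Matrix.isUnit_iff_isUnit_det (M i)).mp (hMinv i))
    rw [mul_add, mul_one, ← mul_assoc, h, one_mul]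
  intro p
  induction p with
  | zero =>
      rw [show (0:ℕ) + 1 = 1 from rfl, show (1:ℕ) = 0 + 1 from rfl, List.range_succ]
      simp only [List.range_zero, List.nil_append, List.map_cons, List.map_nil,
        List.prod_cons, List.prod_nil, mul_one, key 0, hsplit0]
  | succ p ih =>
      rw [List.range_succ, List.map_append, List.prod_append]
      simp only [List.map_cons, List.map_nil, List.prod_cons, List.prod_nil, mul_one]
      rw [mul_assoc, key (p+1), hrec p]
      exact ih
end

section
/- Let A be an n×n invertible matrix over a field with A = M + N where M is invertible. With the recursive split M_{i+1} + N_{i+1} = I + M_i^{-1} N_i for i ≥ 0 (M_0 = M, N_0 = N, all M_i invertible), for every p ≥ 0 the inverse of A satisfies A^{-1} = (I + M_p^{-1} N_p)^{-1} · (∏_{i=0}^{p} M_i^{-1}) with the product taken in reversed order, i.e., A^{-1} = (I + M_p^{-1} N_p)^{-1} · M_p^{-1} · ... · M_1^{-1} · M_0^{-1}. -/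
theorem recursive_split_inverse {n : ℕ} {F : Type*} [Field F]
    (A : Matrix (Fin n) (Fin n) F) (hA : IsUnit A)
    (M N : ℕ → Matrix (Fin n) (Fin n) F)
    (hsplit0 : M 0 + N 0 = A)
    (hMinv : ∀ i, IsUnit (M i))
    (hrec : ∀ i, M (i + 1) + N (i + 1) = 1 + (M i)⁻¹ * N i) :
    ∀ p : ℕ, A⁻¹ =
      (1 + (M p)⁻¹ * N p)⁻¹ *
        (((List.range (p + 1)).reverse.map (fun i => (M i)⁻¹)).prod) := by
  have hMi : ∀ i, (M i)⁻¹ * M i = 1 := fun i =>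
    Matrix.nonsing_inv_mul _ ((Matrix.isUnit_iff_isUnit_det _).mp (hMinv i))
  have key : ∀ p, (((List.range (p + 1)).reverse.map (fun i => (M i)⁻¹)).prod) * A
      = 1 + (M p)⁻¹ * N p := by
    intro p
    induction p with
    | zero =>
      simp only [show List.range 1 = [0] from rfl, List.reverse_singleton, List.map_cons,
        List.map_nil, List.prod_cons, List.prod_nil, mul_one]
      rw [← hsplit0, mul_add, hMi 0]
    | succ p ih =>
      rw [List.range_succ, List.reverse_append, List.reverse_singleton,
        List.singleton_append, List.map_cons, List.prod_cons, mul_assoc, ih,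
        ← hrec p, mul_add, hMi (p + 1)]
  intro p
  have hprod : IsUnit (((List.range (p + 1)).reverse.map (fun i => (M i)⁻¹)).prod) := by
    apply List.prod_isUnit
    intro u hu
    simp only [List.mem_map] at hu
    obtain ⟨i, -, rfl⟩ := hu
    exact Matrix.isUnit_nonsing_inv_iff.mpr (hMinv i)
  have hB : IsUnit (1 + (M p)⁻¹ * N p) := by
    rw [← key p]; exact hprod.mul hA
  apply Matrix.inv_eq_left_inv
  rw [mul_assoc, key p,
    Matrix.nonsing_inv_mul _ ((Matrix.isUnit_iff_isUnit_det _).mp hB)]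
end
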